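/- For the complete bipartite AUC-comparison graph Laplacian L = diag(ỹ/n₊ + (1−ỹ)/n₋) − (1/(n₊n₋))[ỹ(1−ỹ)^T + (1−ỹ)ỹ^T] on n = n₊ + n₋ vertices, the operator (spectral) norm of L equals n/(n₊ n₋). -/

import Mathlib

open Matrix BigOperators

lemma stmt_14_aux (a b P Q s t : ℝ) (ha : 0 < a) (hb : 0 < b)
    (hs : s^2 ≤ a*P) (ht : t^2 ≤ b*Q) :
    (1/a)^2*P + 2*(1/a)*(-(t/(a*b)))*s + a*(t/(a*b))^2
    + ((1/b)^2*Q + 2*(1/b)*(-(s/(a*b)))*t + b*(s/(a*b))^2)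
    ≤ ((a+b)/(a*b))^2 * (P+Q) := by
  rw [← sub_nonneg]
  have hid : ((a+b)/(a*b))^2 * (P+Q) - ((1/a)^2*P + 2*(1/a)*(-(t/(a*b)))*s + a*(t/(a*b))^2
    + ((1/b)^2*Q + 2*(1/b)*(-(s/(a*b)))*t + b*(s/(a*b))^2))
      = ((a+2*b)*(a*P-s^2)+(2*a+b)*(b*Q-t^2)+(a+b)*(s+t)^2)/(a^2*b^2) := by
    field_simp
    ring
  rw [hid]
  apply div_nonneg _ (by positivity)
  have h1 : 0 ≤ a*P - s^2 := by linarith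
  have h2 : 0 ≤ b*Q - t^2 := by linarith
  positivity

/-- The operator (spectral) norm of the complete bipartite AUC-comparison graph Laplacian
`L = diag(ỹ/n₊ + (1−ỹ)/n₋) − (1/(n₊n₋))[ỹ(1−ỹ)ᵀ + (1−ỹ)ỹᵀ]` on `n = n₊ + n₋` vertices
equals `n/(n₊ n₋)`. -/
theorem stmt_14 (n : ℕ) (y : Fin n → ℝ) (hy : ∀ i, y i = 0 ∨ y i = 1)
    (np nm : ℕ)
    (hnp : np = (Finset.univ.filter (fun i : Fin n => y i = 1)).card)
    (hnm : nm = (Finset.univ.filter (fun i : Fin n => y i = 0)).card)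
    (hnp1 : 1 ≤ np) (hnm1 : 1 ≤ nm)
    (L : Matrix (Fin n) (Fin n) ℝ)
    (hL : L = Matrix.diagonal (fun i => y i / (np : ℝ) + (1 - y i) / (nm : ℝ))
      - (1 / ((np : ℝ) * (nm : ℝ))) •
        (Matrix.vecMulVec y (fun i => 1 - y i) + Matrix.vecMulVec (fun i => 1 - y i) y)) :
    ‖Matrix.toEuclideanCLM (𝕜 := ℝ) L‖ = (n : ℝ) / ((np : ℝ) * (nm : ℝ)) := by
  classical
  have hnp0 : (0:ℝ) < np := by exact_mod_cast hnp1
  have hnm0 : (0:ℝ) < nm := by exact_mod_cast hnm1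
  set pos := Finset.univ.filter (fun i : Fin n => y i = 1) with hposdef
  set neg := Finset.univ.filter (fun i : Fin n => y i = 0) with hnegdef
  have hyp : ∀ i ∈ pos, y i = 1 := fun i hi => (Finset.mem_filter.mp hi).2
  have hyn : ∀ i ∈ neg, y i = 0 := fun i hi => (Finset.mem_filter.mp hi).2
  have hnegeq : neg = Finset.univ.filter (fun i => ¬ y i = 1) := by
    ext i
    simp only [hnegdef, Finset.mem_filter, Finset.mem_univ, true_and]
    rcases hy i with h | h <;> simp [h]
  have hsplit : ∀ f : Fin n → ℝ, ∑ i ∈ pos, f i + ∑ i ∈ neg, f i = ∑ i, f i := by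
    intro f
    rw [hnegeq, hposdef, Finset.sum_filter_add_sum_filter_not]
  have hcard : np + nm = n := by
    rw [hnp, hnm, hnegeq]
    simpa using Finset.card_filter_add_card_filter_not
      (s := (Finset.univ : Finset (Fin n))) (p := fun i : Fin n => y i = 1)
  have hn : (np:ℝ) + nm = n := by exact_mod_cast hcard
  rw [← hn]
  set c : ℝ := ((np:ℝ) + nm) / ((np:ℝ) * nm) with hcdef
  have hcpos : 0 < c := by positivity
  -- mulVec formula
  have hmv : ∀ (x : Fin n → ℝ) (i : Fin n), L.mulVec x i =
      (y i / np + (1 - y i)/nm) * x i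
        - (y i * (∑ j ∈ neg, x j) + (1 - y i) * (∑ j ∈ pos, x j)) / ((np:ℝ)*nm) := by
    intro x i
    have h1 : ∑ j ∈ pos, y j * x j = ∑ j ∈ pos, x j :=
      Finset.sum_congr rfl (fun j hj => by rw [hyp j hj, one_mul])
    have h2 : ∑ j ∈ neg, y j * x j = 0 :=
      Finset.sum_eq_zero (fun j hj => by rw [hyn j hj, zero_mul])
    have hys : ∑ j, y j * x j = ∑ j ∈ pos, x j := by
      rw [← hsplit (fun j => y j * x j), h1, h2, add_zero]
    have h3 : ∑ j ∈ pos, (1 - y j) * x j = 0 :=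
      Finset.sum_eq_zero (fun j hj => by rw [hyp j hj]; ring)
    have h4 : ∑ j ∈ neg, (1 - y j) * x j = ∑ j ∈ neg, x j :=
      Finset.sum_congr rfl (fun j hj => by rw [hyn j hj]; ring)
    have hyt : ∑ j, (1 - y j) * x j = ∑ j ∈ neg, x j := by
      rw [← hsplit (fun j => (1 - y j) * x j), h3, h4, zero_add]
    subst hL
    simp only [Matrix.sub_mulVec, Matrix.smul_mulVec, Matrix.add_mulVec,
      Pi.sub_apply, Pi.smul_apply, Pi.add_apply, Matrix.mulVec_diagonal, smul_eq_mul]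
    rw [show (vecMulVec y (fun i => 1 - y i)).mulVec x i = y i * ∑ j, (1 - y j) * x j from by
        simp [Matrix.mulVec, dotProduct, Matrix.vecMulVec_apply, Finset.mul_sum, mul_assoc],
      show (vecMulVec (fun i => 1 - y i) y).mulVec x i = (1 - y i) * ∑ j, y j * x j from by
        simp [Matrix.mulVec, dotProduct, Matrix.vecMulVec_apply, Finset.mul_sum, mul_assoc]]
    rw [hys, hyt]
    ring
  have hexp : ∀ (u : Finset (Fin n)) (x : Fin n → ℝ) (a b : ℝ),
      ∑ i ∈ u, (a * x i + b)^2
        = a^2 * (∑ i ∈ u, x i^2) + 2*a*b*(∑ i ∈ u, x i) + (u.card : ℝ) * b^2 := by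
    intro u x a b
    have h : ∀ i, (a * x i + b)^2 = a^2 * x i^2 + (2*a*b) * x i + b^2 := fun i => by ring
    simp_rw [h]
    rw [Finset.sum_add_distrib, Finset.sum_add_distrib, ← Finset.mul_sum, ← Finset.mul_sum,
      Finset.sum_const, nsmul_eq_mul]
  have hTx : ∀ (x : EuclideanSpace ℝ (Fin n)) (i : Fin n),
      (Matrix.toEuclideanCLM (𝕜 := ℝ) L x) i = L.mulVec (fun j => x j) i := by
    intro x i
    have := congrFun (Matrix.ofLp_toEuclideanCLM L x) i
    simpa [Matrix.toLin'_apply] using this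
  apply le_antisymm
  · -- upper bound
    apply ContinuousLinearMap.opNorm_le_bound _ hcpos.le
    intro x
    rw [EuclideanSpace.norm_eq, EuclideanSpace.norm_eq]
    rw [show c * Real.sqrt (∑ i, ‖x i‖^2) = Real.sqrt (c^2 * ∑ i, ‖x i‖^2) from by
      rw [Real.sqrt_mul (by positivity), Real.sqrt_sq hcpos.le]]
    apply Real.sqrt_le_sqrt
    simp_rw [hTx, Real.norm_eq_abs, sq_abs]
    set x' : Fin n → ℝ := fun j => x j with hx'
    set s := ∑ j ∈ pos, x' j with hsdef
    set t := ∑ j ∈ neg, x' j with htdef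
    have hApos : ∀ i ∈ pos, (L.mulVec x' i)^2 = ((1/(np:ℝ)) * x' i + (-(t/((np:ℝ)*nm))))^2 :=
      fun i hi => by rw [hmv x' i, hyp i hi, ← htdef]; ring_nf
    have hAneg : ∀ i ∈ neg, (L.mulVec x' i)^2 = ((1/(nm:ℝ)) * x' i + (-(s/((np:ℝ)*nm))))^2 :=
      fun i hi => by rw [hmv x' i, hyn i hi, ← hsdef]; ring_nf
    rw [← hsplit (fun i => (L.mulVec x' i)^2), ← hsplit (fun i => x' i ^2)]
    rw [Finset.sum_congr rfl hApos, Finset.sum_congr rfl hAneg, hexp, hexp, ← hnp, ← hnm]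
    have hCS1 : s^2 ≤ (np:ℝ) * ∑ i ∈ pos, x' i ^ 2 := by
      have := sq_sum_le_card_mul_sum_sq (s := pos) (f := x')
      rw [← hnp] at this
      exact_mod_cast this
    have hCS2 : t^2 ≤ (nm:ℝ) * ∑ i ∈ neg, x' i ^ 2 := by
      have := sq_sum_le_card_mul_sum_sq (s := neg) (f := x')
      rw [← hnm] at this
      exact_mod_cast this
    have := stmt_14_aux (np:ℝ) (nm:ℝ) (∑ i ∈ pos, x' i ^ 2) (∑ i ∈ neg, x' i ^ 2) s t
      hnp0 hnm0 hCS1 hCS2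
    calc (1/(np:ℝ))^2 * (∑ i ∈ pos, x' i^2) + 2*(1/(np:ℝ))*(-(t/((np:ℝ)*nm)))*s
          + (np:ℝ)*(-(t/((np:ℝ)*nm)))^2
        + ((1/(nm:ℝ))^2 * (∑ i ∈ neg, x' i^2) + 2*(1/(nm:ℝ))*(-(s/((np:ℝ)*nm)))*t
          + (nm:ℝ)*(-(s/((np:ℝ)*nm)))^2)
        = (1/(np:ℝ))^2 * (∑ i ∈ pos, x' i^2) + 2*(1/(np:ℝ))*(-(t/((np:ℝ)*nm)))*s
          + (np:ℝ)*(t/((np:ℝ)*nm))^2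
        + ((1/(nm:ℝ))^2 * (∑ i ∈ neg, x' i^2) + 2*(1/(nm:ℝ))*(-(s/((np:ℝ)*nm)))*t
          + (nm:ℝ)*(s/((np:ℝ)*nm))^2) := by ring
      _ ≤ c^2 * ((∑ i ∈ pos, x' i^2) + (∑ i ∈ neg, x' i^2)) := this
  · -- lower bound via eigenvector
    set v : EuclideanSpace ℝ (Fin n) :=
      (WithLp.equiv 2 (Fin n → ℝ)).symm (fun i => y i/np - (1-y i)/nm) with hvdef
    have hvi : ∀ i, v i = y i/np - (1-y i)/nm := fun i => rfl
    have hsv : ∑ j ∈ pos, v j = 1 := by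
      rw [Finset.sum_congr rfl (fun j hj => show v j = 1/(np:ℝ) by
        rw [hvi j, hyp j hj]; ring)]
      rw [Finset.sum_const, nsmul_eq_mul, ← hnp]
      field_simp
    have htv : ∑ j ∈ neg, v j = -1 := by
      rw [Finset.sum_congr rfl (fun j hj => show v j = -(1/(nm:ℝ)) by
        rw [hvi j, hyn j hj]; ring)]
      rw [Finset.sum_const, nsmul_eq_mul, ← hnm]
      field_simp
    have hvnormsq : ∑ i, ‖v i‖^2 = c := by
      simp_rw [Real.norm_eq_abs, sq_abs]
      rw [← hsplit (fun i => v i ^ 2)]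
      rw [Finset.sum_congr rfl (fun j hj => show v j ^ 2 = (1/(np:ℝ))^2 by
          rw [hvi j, hyp j hj]; ring),
        Finset.sum_congr rfl (fun j hj => show v j ^ 2 = (1/(nm:ℝ))^2 by
          rw [hvi j, hyn j hj]; ring)]
      rw [Finset.sum_const, Finset.sum_const, nsmul_eq_mul, nsmul_eq_mul, ← hnp, ← hnm, hcdef]
      field_simp
      ring
    have hvnorm : ‖v‖ = Real.sqrt c := by
      rw [EuclideanSpace.norm_eq, hvnormsq]
    have hvpos : 0 < ‖v‖ := by
      rw [hvnorm]
      exact Real.sqrt_pos.mpr hcpos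
    have hTv : Matrix.toEuclideanCLM (𝕜 := ℝ) L v = c • v := by
      ext i
      rw [hTx v i]
      rw [show (c • v) i = c * v i from rfl]
      rw [hmv (fun j => v j) i]
      rw [show (∑ j ∈ neg, v j) = -1 from htv,
        show (∑ j ∈ pos, v j) = 1 from hsv]
      simp only [hvi]
      rcases hy i with h | h <;> rw [h, hcdef] <;> field_simp <;> ring
    have hnv : ‖Matrix.toEuclideanCLM (𝕜 := ℝ) L v‖ = c * ‖v‖ := by
      rw [hTv, norm_smul, Real.norm_eq_abs, abs_of_nonneg hcpos.le]
    have h3 := (Matrix.toEuclideanCLM (𝕜 := ℝ) L).le_opNorm v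
    rw [hnv] at h3
    exact le_of_mul_le_mul_right h3 hvpos
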